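/- Suppose that for every s = 0, …, k the NGD iterates satisfy λmin(G(s)) ≥ λ₀/2 and ‖u(s) - y‖₂ ≤ (1 - η/2)^s ‖u(0) - y‖₂. Then for every hidden unit r ∈ {1, …, m}, ‖w_r(k+1) - w_r(0)‖₂ ≤ 4√n·‖y - u(0)‖₂ / (√m · λ₀). -/

import Mathlib

open Matrix MeasureTheory ProbabilityTheory Real
open scoped BigOperators ENNReal NNReal

/-- Euclidean norm of a finitely-indexed real vector. -/
noncomputable def enorm2 {ι : Type*} [Fintype ι] (v : ι → ℝ) : ℝ :=
  Real.sqrt (∑ i, v i * v i)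

/-- Euclidean norm of a vector in `Fin n → ℝ`. -/
noncomputable def vnorm {n : ℕ} (v : Fin n → ℝ) : ℝ := Real.sqrt (v ⬝ᵥ v)

/-- Spectral norm (ℓ²-operator norm) of a matrix. -/
noncomputable def specNorm {ι κ : Type*} [Fintype ι] [Fintype κ] (A : Matrix ι κ ℝ) : ℝ :=
  sSup {r : ℝ | ∃ v : κ → ℝ, enorm2 v = 1 ∧ r = enorm2 (A *ᵥ v)}

/-- Smallest eigenvalue of a symmetric matrix, via the Rayleigh quotient. -/
noncomputable def lamMin {n : ℕ} (A : Matrix (Fin n) (Fin n) ℝ) : ℝ :=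
  sInf {r : ℝ | ∃ v : Fin n → ℝ, vnorm v = 1 ∧ r = v ⬝ᵥ (A *ᵥ v)}

/-- Largest eigenvalue of a symmetric matrix, via the Rayleigh quotient. -/
noncomputable def lamMax {n : ℕ} (A : Matrix (Fin n) (Fin n) ℝ) : ℝ :=
  sSup {r : ℝ | ∃ v : Fin n → ℝ, vnorm v = 1 ∧ r = v ⬝ᵥ (A *ᵥ v)}

/-- Output of the two-layer ReLU network `f(w,a,x) = (1/√m) ∑ᵣ aᵣ ReLU(wᵣᵀ x)` on each
of the `n` training inputs. -/
noncomputable def netOut {d n m : ℕ} (x : Fin n → Fin d → ℝ) (a : Fin m → ℝ)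
    (w : Fin m → Fin d → ℝ) : Fin n → ℝ :=
  fun i => (1 / Real.sqrt m) * ∑ r : Fin m, a r * max (w r ⬝ᵥ x i) 0

/-- Jacobian of `netOut` with respect to the first-layer weights: the `i`-th row is
`(1/√m) (a₁ 1{w₁ᵀxᵢ ≥ 0} xᵢᵀ, …, aₘ 1{wₘᵀxᵢ ≥ 0} xᵢᵀ)`. -/
noncomputable def jacNet {d n m : ℕ} (x : Fin n → Fin d → ℝ) (a : Fin m → ℝ)
    (w : Fin m → Fin d → ℝ) : Matrix (Fin n) (Fin m × Fin d) ℝ :=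
  Matrix.of fun i rj =>
    (1 / Real.sqrt m) * a rj.1 * (if 0 ≤ w rj.1 ⬝ᵥ x i then 1 else 0) * x i rj.2

/-- Gram matrix `G(w) = J(w) J(w)ᵀ`. -/
noncomputable def gramNet {d n m : ℕ} (x : Fin n → Fin d → ℝ) (a : Fin m → ℝ)
    (w : Fin m → Fin d → ℝ) : Matrix (Fin n) (Fin n) ℝ :=
  jacNet x a w * (jacNet x a w)ᵀ

/-- NGD iterates on the first-layer weights:
`w(k+1) = w(k) - η J(k)ᵀ G(k)⁻¹ (u(k) - y)`. -/
noncomputable def ngdNet {d n m : ℕ} (x : Fin n → Fin d → ℝ) (a : Fin m → ℝ)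
    (y : Fin n → ℝ) (η : ℝ) (w0 : Fin m → Fin d → ℝ) : ℕ → Fin m → Fin d → ℝ
  | 0 => w0
  | k + 1 => fun r j =>
      ngdNet x a y η w0 k r j -
        η * (((jacNet x a (ngdNet x a y η w0 k))ᵀ *ᵥ
          ((gramNet x a (ngdNet x a y η w0 k))⁻¹ *ᵥ
            (netOut x a (ngdNet x a y η w0 k) - y))) (r, j))

/-- Limiting Gram matrix `G^∞ᵢⱼ = xᵢᵀxⱼ (π - arccos(xᵢᵀxⱼ))/(2π)`. -/
noncomputable def ginf {d n : ℕ} (x : Fin n → Fin d → ℝ) : Matrix (Fin n) (Fin n) ℝ :=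
  Matrix.of fun i j => x i ⬝ᵥ x j * (Real.pi - Real.arccos (x i ⬝ᵥ x j)) / (2 * Real.pi)

/-- Euclidean norm on the full weight vector `w ∈ ℝ^{md}`. -/
noncomputable def wnorm {d m : ℕ} (w : Fin m → Fin d → ℝ) : ℝ :=
  Real.sqrt (∑ r : Fin m, w r ⬝ᵥ w r)

/-- Product Gaussian initialization measure: `wᵣ ~ N(0, ν² I_d)` i.i.d. -/
noncomputable def gaussInit (d m : ℕ) (ν : ℝ) : Measure (Fin m → Fin d → ℝ) :=
  Measure.pi fun _ : Fin m => Measure.pi fun _ : Fin d =>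
    gaussianReal 0 (Real.toNNReal (ν ^ 2))

/-- Uniform `{±1}` measure on ℝ. -/
noncomputable def signMeasure : Measure ℝ :=
  (PMF.uniformOfFinset ({-1, 1} : Finset ℝ) ⟨-1, by simp⟩).toMeasure

instance : IsProbabilityMeasure signMeasure := by
  unfold signMeasure; infer_instance

/-- Product uniform `{±1}` initialization measure for the output weights. -/
noncomputable def signInit (m : ℕ) : Measure (Fin m → ℝ) :=
  Measure.pi fun _ : Fin m => signMeasure

/-- Joint initialization measure over `(w(0), a)`. -/
noncomputable def initMeasure (d m : ℕ) (ν : ℝ) :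
    Measure ((Fin m → Fin d → ℝ) × (Fin m → ℝ)) :=
  (gaussInit d m ν).prod (signInit m)

lemma vnorm_eq_norm {n : ℕ} (v : Fin n → ℝ) :
    vnorm v = ‖(WithLp.equiv 2 (Fin n → ℝ)).symm v‖ := by
  rw [vnorm, dotProduct, EuclideanSpace.norm_eq]
  congr 1
  refine Finset.sum_congr rfl fun i _ => ?_
  rw [WithLp.equiv_symm_apply, PiLp.toLp_apply, Real.norm_eq_abs, sq_abs, sq]

lemma vnorm_nonneg {n : ℕ} (v : Fin n → ℝ) : 0 ≤ vnorm v := Real.sqrt_nonneg _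

lemma vnorm_eq_zero {n : ℕ} {v : Fin n → ℝ} (h : vnorm v = 0) : v = 0 := by
  rw [vnorm_eq_norm, norm_eq_zero] at h
  have := congrArg (WithLp.equiv 2 (Fin n → ℝ)) h
  simpa using this

lemma vnorm_smul {n : ℕ} (c : ℝ) (v : Fin n → ℝ) : vnorm (c • v) = |c| * vnorm v := by
  rw [vnorm_eq_norm, vnorm_eq_norm, WithLp.equiv_symm_apply, WithLp.toLp_smul, norm_smul, Real.norm_eq_abs]

lemma dot_le {n : ℕ} (v w : Fin n → ℝ) : |v ⬝ᵥ w| ≤ vnorm v * vnorm w := by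
  rw [vnorm_eq_norm, vnorm_eq_norm]
  have : v ⬝ᵥ w = (inner ℝ ((WithLp.equiv 2 (Fin n → ℝ)).symm v)
      ((WithLp.equiv 2 (Fin n → ℝ)).symm w) : ℝ) := by
    rw [PiLp.inner_apply]
    simp [dotProduct, RCLike.inner_apply, mul_comm]
  rw [this]
  exact abs_real_inner_le_norm _ _

lemma dot_self_nonneg {n : ℕ} (v : Fin n → ℝ) : 0 ≤ v ⬝ᵥ v :=
  Finset.sum_nonneg fun i _ => mul_self_nonneg _

lemma vnorm_zero {n : ℕ} : vnorm (0 : Fin n → ℝ) = 0 := by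
  simp [vnorm]

lemma vnorm_sum_le {n : ℕ} {ι : Type*} (s : Finset ι) (f : ι → Fin n → ℝ) :
    vnorm (∑ i ∈ s, f i) ≤ ∑ i ∈ s, vnorm (f i) := by
  have h : (WithLp.equiv 2 (Fin n → ℝ)).symm (∑ i ∈ s, f i)
      = ∑ i ∈ s, (WithLp.equiv 2 (Fin n → ℝ)).symm (f i) := map_sum (WithLp.linearEquiv 2 ℝ (Fin n → ℝ)).symm _ _
  rw [vnorm_eq_norm, h]
  refine (norm_sum_le _ _).trans ?_
  exact le_of_eq (Finset.sum_congr rfl fun i _ => (vnorm_eq_norm (f i)).symm)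

lemma sum_abs_le {n : ℕ} (v : Fin n → ℝ) : ∑ i, |v i| ≤ Real.sqrt n * vnorm v := by
  have h := dot_le (fun i => |v i|) (fun _ => (1:ℝ))
  have h1 : (fun i => |v i|) ⬝ᵥ (fun _ => (1:ℝ)) = ∑ i, |v i| := by
    simp [dotProduct]
  have h2 : vnorm (fun i => |v i|) = vnorm v := by
    unfold vnorm dotProduct
    congr 1
    refine Finset.sum_congr rfl fun i _ => ?_
    simp [abs_mul_abs_self]
  have h3 : vnorm (fun _ : Fin n => (1:ℝ)) = Real.sqrt n := by
    unfold vnorm dotProduct; simp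
  rw [h1, h2, h3] at h
  have := (le_abs_self (∑ i, |v i|)).trans h
  linarith [this, mul_comm (vnorm v) (Real.sqrt n)]

-- Rayleigh lower bound gives bound on inverse
lemma inv_mulVec_bound {n : ℕ} (A : Matrix (Fin n) (Fin n) ℝ) (μ : ℝ) (hμ : 0 < μ)
    (h : μ ≤ lamMin A) (res : Fin n → ℝ) :
    μ * vnorm (A⁻¹ *ᵥ res) ≤ vnorm res := by
  -- bddBelow of the Rayleigh set
  have hbdd : BddBelow {r : ℝ | ∃ v : Fin n → ℝ, vnorm v = 1 ∧ r = v ⬝ᵥ (A *ᵥ v)} := by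
    refine ⟨-(∑ i, ∑ j, |A i j|), ?_⟩
    rintro r ⟨v, hv, rfl⟩
    have hvi : ∀ i, |v i| ≤ 1 := by
      intro i
      have : v i * v i ≤ v ⬝ᵥ v := by
        rw [dotProduct]
        exact Finset.single_le_sum (f := fun j => v j * v j)
          (fun j _ => mul_self_nonneg _) (Finset.mem_univ i)
      have h2 : v ⬝ᵥ v = 1 := by
        have h3 : Real.sqrt (v ⬝ᵥ v) ^ 2 = 1 := by rw [vnorm] at hv; rw [hv]; norm_num
        rwa [Real.sq_sqrt (dot_self_nonneg v)] at h3
      nlinarith [abs_nonneg (v i), sq_abs (v i)]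
    have : |v ⬝ᵥ (A *ᵥ v)| ≤ ∑ i, ∑ j, |A i j| := by
      calc |v ⬝ᵥ (A *ᵥ v)| ≤ ∑ i, |v i * (A *ᵥ v) i| := by
            rw [dotProduct]; exact Finset.abs_sum_le_sum_abs _ _
        _ ≤ ∑ i, ∑ j, |A i j| := by
            refine Finset.sum_le_sum fun i _ => ?_
            rw [abs_mul, mulVec, dotProduct]
            calc |v i| * |∑ j, A i j * v j| ≤ 1 * ∑ j, |A i j * v j| := by
                  exact mul_le_mul (hvi i) (Finset.abs_sum_le_sum_abs _ _)
                    (abs_nonneg _) zero_le_one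
              _ = ∑ j, |A i j| * |v j| := by rw [one_mul]; exact Finset.sum_congr rfl fun j _ => abs_mul _ _
              _ ≤ ∑ j, |A i j| * 1 := Finset.sum_le_sum fun j _ =>
                  mul_le_mul_of_nonneg_left (hvi j) (abs_nonneg _)
              _ = ∑ j, |A i j| := by simp
    linarith [neg_abs_le (v ⬝ᵥ (A *ᵥ v))]
  -- key: for any w, μ * vnorm w ≤ vnorm (A *ᵥ w)
  have key : ∀ w : Fin n → ℝ, μ * vnorm w ≤ vnorm (A *ᵥ w) := by
    intro w
    rcases eq_or_ne w 0 with rfl | hw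
    · rw [vnorm_zero, mulVec_zero, vnorm_zero, mul_zero]
    · have hnw : 0 < vnorm w := by
        rcases (vnorm_nonneg w).lt_or_eq with h' | h'
        · exact h'
        · exact absurd (vnorm_eq_zero h'.symm) hw
      set c := (vnorm w)⁻¹
      have hc : 0 < c := inv_pos.mpr hnw
      have hunit : vnorm (c • w) = 1 := by
        rw [vnorm_smul, abs_of_pos hc]
        exact inv_mul_cancel₀ hnw.ne'
      have hmem : (c • w) ⬝ᵥ (A *ᵥ (c • w)) ∈
          {r : ℝ | ∃ v : Fin n → ℝ, vnorm v = 1 ∧ r = v ⬝ᵥ (A *ᵥ v)} :=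
        ⟨c • w, hunit, rfl⟩
      have hray : μ ≤ (c • w) ⬝ᵥ (A *ᵥ (c • w)) :=
        h.trans (csInf_le hbdd hmem)
      have hval : (c • w) ⬝ᵥ (A *ᵥ (c • w)) = c ^ 2 * (w ⬝ᵥ (A *ᵥ w)) := by
        rw [mulVec_smul, smul_dotProduct, dotProduct_smul]
        simp [smul_eq_mul]; ring
      have hcs : w ⬝ᵥ (A *ᵥ w) ≤ vnorm w * vnorm (A *ᵥ w) :=
        (le_abs_self _).trans (dot_le _ _)
      have : μ ≤ c ^ 2 * (vnorm w * vnorm (A *ᵥ w)) := by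
        rw [hval] at hray
        nlinarith [sq_nonneg c]
      have hc1 : c * vnorm w = 1 := inv_mul_cancel₀ hnw.ne'
      have h4 : μ * vnorm w ≤ c ^ 2 * (vnorm w * vnorm (A *ᵥ w)) * vnorm w :=
        mul_le_mul_of_nonneg_right this hnw.le
      have h5 : c ^ 2 * (vnorm w * vnorm (A *ᵥ w)) * vnorm w
          = (c * vnorm w) ^ 2 * vnorm (A *ᵥ w) := by ring
      rw [h5, hc1] at h4
      simpa using h4
  -- A is invertible
  rcases eq_or_ne (A⁻¹ *ᵥ res) 0 with h0 | h0
  · rw [h0, vnorm_zero, mul_zero]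
    exact vnorm_nonneg res
  · have hinj : Function.Injective A.mulVec := by
      intro u v huv
      have : A *ᵥ (u - v) = 0 := by rw [mulVec_sub, huv, sub_self]
      have h1 : vnorm (A *ᵥ (u - v)) = 0 := by rw [this, vnorm_zero]
      have h2 := key (u - v)
      have h3 : vnorm (u - v) = 0 := by nlinarith [vnorm_nonneg (u - v)]
      have := vnorm_eq_zero h3
      exact sub_eq_zero.mp this
    have hunit : IsUnit A := Matrix.mulVec_injective_iff_isUnit.mp hinj
    have hAAinv : A * A⁻¹ = 1 := Matrix.mul_nonsing_inv A
      ((Matrix.isUnit_iff_isUnit_det A).mp hunit)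
    have := key (A⁻¹ *ᵥ res)
    rwa [Matrix.mulVec_mulVec, hAAinv, Matrix.one_mulVec] at this

lemma vnorm_neg {n : ℕ} (v : Fin n → ℝ) : vnorm (-v) = vnorm v := by
  have : (-v) = (-1 : ℝ) • v := by funext i; simp
  rw [this, vnorm_smul]; simp

lemma jac_block_bound {d n m : ℕ} (x : Fin n → Fin d → ℝ) (a : Fin m → ℝ)
    (w : Fin m → Fin d → ℝ) (hx : ∀ i, vnorm (x i) = 1)
    (ha : ∀ r, a r = 1 ∨ a r = -1) (r : Fin m) (v : Fin n → ℝ) :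
    vnorm (fun j => ((jacNet x a w)ᵀ *ᵥ v) (r, j)) ≤
      Real.sqrt n / Real.sqrt m * vnorm v := by
  set c : Fin n → ℝ := fun i =>
    (1 / Real.sqrt m) * a r * (if 0 ≤ w r ⬝ᵥ x i then (1:ℝ) else 0) * v i with hc
  have heq : (fun j => ((jacNet x a w)ᵀ *ᵥ v) (r, j)) = ∑ i : Fin n, c i • x i := by
    funext j
    rw [Finset.sum_apply]
    simp only [Matrix.mulVec, dotProduct, Matrix.transpose_apply, jacNet,
      Matrix.of_apply, Pi.smul_apply, smul_eq_mul, hc]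
    exact Finset.sum_congr rfl fun i _ => by ring
  have hm : (0:ℝ) ≤ 1 / Real.sqrt m := by positivity
  have hci : ∀ i, |c i| ≤ (1 / Real.sqrt m) * |v i| := by
    intro i
    have habs : |a r| = 1 := by rcases ha r with h | h <;> simp [h]
    calc |c i| = 1 / Real.sqrt m * |a r| *
          |if 0 ≤ w r ⬝ᵥ x i then (1:ℝ) else 0| * |v i| := by
            simp only [hc]
            rw [abs_mul, abs_mul, abs_mul, abs_of_nonneg hm]
      _ ≤ 1 / Real.sqrt m * |v i| := by
          rw [habs, mul_one]
          have hite : |if 0 ≤ w r ⬝ᵥ x i then (1:ℝ) else 0| ≤ 1 := by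
            split_ifs <;> simp
          have h6 := mul_le_mul_of_nonneg_right
            (mul_le_mul_of_nonneg_left hite hm) (abs_nonneg (v i))
          simpa using h6
  calc vnorm (fun j => ((jacNet x a w)ᵀ *ᵥ v) (r, j))
      = vnorm (∑ i : Fin n, c i • x i) := by rw [heq]
    _ ≤ ∑ i : Fin n, vnorm (c i • x i) := vnorm_sum_le _ _
    _ = ∑ i : Fin n, |c i| := by
        refine Finset.sum_congr rfl fun i _ => ?_
        rw [vnorm_smul, hx i, mul_one]
    _ ≤ ∑ i : Fin n, (1 / Real.sqrt m) * |v i| := Finset.sum_le_sum fun i _ => hci i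
    _ = (1 / Real.sqrt m) * ∑ i : Fin n, |v i| := by rw [Finset.mul_sum]
    _ ≤ (1 / Real.sqrt m) * (Real.sqrt n * vnorm v) :=
        mul_le_mul_of_nonneg_left (sum_abs_le v) hm
    _ = Real.sqrt n / Real.sqrt m * vnorm v := by ring

/-- **Lemma (each hidden unit stays close to its initialization).**
If for every `s = 0, …, k` the NGD iterates satisfy `λmin(G(s)) ≥ λ₀/2` and
`‖u(s) - y‖ ≤ (1 - η/2)^s ‖u(0) - y‖`, then every hidden unit `r` satisfies
`‖wᵣ(k+1) - wᵣ(0)‖ ≤ 4√n ‖y - u(0)‖/(√m λ₀)`. -/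
theorem hidden_unit_close_to_init
    (d n m : ℕ) (x : Fin n → Fin d → ℝ) (a : Fin m → ℝ) (y : Fin n → ℝ)
    (hx : ∀ i, vnorm (x i) = 1)
    (ha : ∀ r, a r = 1 ∨ a r = -1)
    (hpar : ∀ i j, i ≠ j → ∀ cc : ℝ, x i ≠ cc • x j)
    (hlam : 0 < lamMin (ginf x))
    (η : ℝ) (hη0 : 0 < η) (hη1 : η ≤ 1)
    (w0 : Fin m → Fin d → ℝ) (k : ℕ)
    (hG : ∀ s : ℕ, s ≤ k →
      lamMin (ginf x) / 2 ≤ lamMin (gramNet x a (ngdNet x a y η w0 s)))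
    (hres : ∀ s : ℕ, s ≤ k →
      vnorm (netOut x a (ngdNet x a y η w0 s) - y) ≤
        (1 - η / 2) ^ s * vnorm (netOut x a w0 - y)) :
    ∀ r : Fin m,
      vnorm (ngdNet x a y η w0 (k + 1) r - w0 r) ≤
        4 * Real.sqrt n * vnorm (y - netOut x a w0) /
          (Real.sqrt m * lamMin (ginf x)) := by
  intro r
  have hmpos : 0 < m := r.pos
  set L := lamMin (ginf x) with hL
  set R0 := vnorm (netOut x a w0 - y) with hR0
  have hR0nn : 0 ≤ R0 := vnorm_nonneg _
  have hSm : (0:ℝ) < Real.sqrt m := Real.sqrt_pos.mpr (by exact_mod_cast hmpos)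
  have hSn : (0:ℝ) ≤ Real.sqrt n := Real.sqrt_nonneg _
  -- telescoping
  have htel : ngdNet x a y η w0 (k+1) r - w0 r =
      ∑ s ∈ Finset.range (k+1),
        (ngdNet x a y η w0 (s+1) r - ngdNet x a y η w0 s r) :=
    (Finset.sum_range_sub (fun s => ngdNet x a y η w0 s r) (k+1)).symm
  -- per-step bound
  have hstep : ∀ s : ℕ, s ≤ k →
      vnorm (ngdNet x a y η w0 (s+1) r - ngdNet x a y η w0 s r) ≤
        η * (Real.sqrt n / Real.sqrt m) * (2 / L * ((1 - η/2)^s * R0)) := by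
    intro s hs
    set G := gramNet x a (ngdNet x a y η w0 s)
    set res := netOut x a (ngdNet x a y η w0 s) - y with hresdef
    have hdiff : ngdNet x a y η w0 (s+1) r - ngdNet x a y η w0 s r =
        (-η) • (fun j => ((jacNet x a (ngdNet x a y η w0 s))ᵀ *ᵥ (G⁻¹ *ᵥ res)) (r, j)) := by
      funext j
      show ngdNet x a y η w0 (s+1) r j - ngdNet x a y η w0 s r j = _
      simp only [ngdNet, Pi.smul_apply, smul_eq_mul]
      ring
    rw [hdiff, vnorm_smul, abs_neg, abs_of_pos hη0]
    have h1 : vnorm (fun j => ((jacNet x a (ngdNet x a y η w0 s))ᵀ *ᵥ (G⁻¹ *ᵥ res)) (r, j)) ≤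
        Real.sqrt n / Real.sqrt m * vnorm (G⁻¹ *ᵥ res) :=
      jac_block_bound x a _ hx ha r _
    have hmu : 0 < L / 2 := by positivity
    have h2 : (L / 2) * vnorm (G⁻¹ *ᵥ res) ≤ vnorm res :=
      inv_mulVec_bound G (L/2) hmu (hG s hs) res
    have h3 : vnorm (G⁻¹ *ᵥ res) ≤ 2 / L * vnorm res := by
      rw [div_mul_eq_mul_div, le_div_iff₀ hlam]
      nlinarith [vnorm_nonneg (G⁻¹ *ᵥ res)]
    have h4 : vnorm res ≤ (1 - η/2)^s * R0 := hres s hs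
    have h5 : vnorm (G⁻¹ *ᵥ res) ≤ 2 / L * ((1 - η/2)^s * R0) := by
      refine h3.trans ?_
      exact mul_le_mul_of_nonneg_left h4 (by positivity)
    calc η * vnorm (fun j => ((jacNet x a (ngdNet x a y η w0 s))ᵀ *ᵥ (G⁻¹ *ᵥ res)) (r, j))
        ≤ η * (Real.sqrt n / Real.sqrt m * vnorm (G⁻¹ *ᵥ res)) :=
          mul_le_mul_of_nonneg_left h1 hη0.le
      _ ≤ η * (Real.sqrt n / Real.sqrt m * (2 / L * ((1 - η/2)^s * R0))) := by
          refine mul_le_mul_of_nonneg_left ?_ hη0.le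
          exact mul_le_mul_of_nonneg_left h5 (by positivity)
      _ = η * (Real.sqrt n / Real.sqrt m) * (2 / L * ((1 - η/2)^s * R0)) := by ring
  -- geometric sum
  have hgeo : ∑ s ∈ Finset.range (k+1), (1 - η/2)^s ≤ 2 / η := by
    have hrpos : (0:ℝ) ≤ 1 - η/2 := by linarith
    have hr1 : (1 - η/2 : ℝ) ≠ 1 := by intro h; linarith
    rw [geom_sum_eq hr1]
    have hp : (0:ℝ) ≤ (1 - η/2)^(k+1) := pow_nonneg hrpos _
    have hd : ((1 - η/2)^(k+1) - 1)/((1 - η/2) - 1)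
        = (1 - (1 - η/2)^(k+1)) * (2/η) := by
      rw [div_eq_iff (by intro h; linarith)]
      field_simp
      ring
    rw [hd]
    nlinarith [mul_nonneg hp (le_of_lt (div_pos two_pos hη0))]
  -- combine
  have hsum : vnorm (ngdNet x a y η w0 (k+1) r - w0 r) ≤
      ∑ s ∈ Finset.range (k+1), (η * (Real.sqrt n / Real.sqrt m) * (2 / L * ((1 - η/2)^s * R0))) := by
    rw [htel]
    refine (vnorm_sum_le _ _).trans ?_
    refine Finset.sum_le_sum fun s hsmem => ?_
    exact hstep s (Nat.lt_succ_iff.mp (Finset.mem_range.mp hsmem))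
  have hfac : ∑ s ∈ Finset.range (k+1),
      (η * (Real.sqrt n / Real.sqrt m) * (2 / L * ((1 - η/2)^s * R0))) =
      η * (Real.sqrt n / Real.sqrt m) * (2 / L) * R0 * (∑ s ∈ Finset.range (k+1), (1 - η/2)^s) := by
    rw [Finset.mul_sum]
    exact Finset.sum_congr rfl fun s _ => by ring
  have hfin : vnorm (ngdNet x a y η w0 (k+1) r - w0 r) ≤
      η * (Real.sqrt n / Real.sqrt m) * (2 / L) * R0 * (2 / η) := by
    rw [hfac] at hsum
    refine hsum.trans ?_
    refine mul_le_mul_of_nonneg_left hgeo ?_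
    positivity
  have hyu : vnorm (y - netOut x a w0) = R0 := by
    rw [hR0, ← vnorm_neg (netOut x a w0 - y)]
    congr 1; funext i; simp
  rw [hyu]
  refine hfin.trans (le_of_eq ?_)
  field_simp
  ring
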